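/- Let d ≥ 1 and let ρ : 𝓘 × 𝓘 → [0,∞) satisfy: ρ(I,J) = 0 whenever one of I, J is a prefix of the other; ρ(I,J) = ρ(J,I) for all I, J; and ρ(J,K) ≥ ρ(I,K) whenever I is a prefix of J. For n ≥ 1 let r_n^* := sup{ρ(J₁,J₂) : J₁, J₂ ∈ 𝓘 have length ≥ n, agree in their first n − 1 entries, and differ in their n-th entry}. If ∑_n 2^{n/d} r_n^* < ∞, then there exists a family (A_I)_{I ∈ 𝓘} of nonempty bounded subsets of ℝ^d such that: A_J ⊆ A_I whenever I is a prefix of J; A_I ∩ A_J = ∅ whenever neither of I, J is a prefix of the other; and dist(A_I, A_J) ≥ ρ(I,J) whenever neither of I, J is a prefix of the other. -/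

import Mathlib

open Set

namespace EmbedConstrAux

noncomputable def aSeq (rstar : ℕ → ℝ) (n : ℕ) : ℝ := rstar (n + 1) / 2 + (4:ℝ)⁻¹ ^ n

noncomputable def gFun (rstar : ℕ → ℝ) (d : ℕ) (n : ℕ) : ℝ :=
  (2:ℝ) ^ (((n:ℝ) + 1) / d) * aSeq rstar n

noncomputable def cSeq (rstar : ℕ → ℝ) (d : ℕ) (m : ℕ) : ℝ :=
  ∑' j : ℕ, (2:ℝ) ^ j * aSeq rstar (m + j * d)

noncomputable def XPt (rstar : ℕ → ℝ) (d : ℕ) (I : List Bool) : EuclideanSpace ℝ (Fin d) :=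
  WithLp.toLp 2 (fun i => ∑ k ∈ Finset.range I.length,
    if k % d = (i : ℕ) then (if I.getD k false then (1:ℝ) else -1) * cSeq rstar d k else 0)

variable {rstar : ℕ → ℝ} {d : ℕ}

lemma aSeq_pos (hrs : ∀ n, 0 ≤ rstar (n+1)) (n : ℕ) : 0 < aSeq rstar n := by
  have h1 : (0:ℝ) < (4:ℝ)⁻¹ ^ n := by positivity
  have h2 := hrs n
  unfold aSeq; linarith

lemma aSeq_nonneg (hrs : ∀ n, 0 ≤ rstar (n+1)) (n : ℕ) : 0 ≤ aSeq rstar n :=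
  (aSeq_pos hrs n).le

lemma gFun_nonneg (hrs : ∀ n, 0 ≤ rstar (n+1)) (n : ℕ) : 0 ≤ gFun rstar d n := by
  have := aSeq_nonneg hrs n
  unfold gFun
  positivity

lemma gFun_summable (hd : 1 ≤ d) (hrs : ∀ n, 0 ≤ rstar (n+1))
    (h_sum : Summable fun n : ℕ => (2 : ℝ) ^ ((n : ℝ) / d) * rstar n) :
    Summable (gFun rstar d) := by
  have hd0 : (0:ℝ) < (d:ℝ) := by exact_mod_cast hd
  have h1 : Summable (fun n : ℕ => (2:ℝ) ^ (((n:ℝ) + 1) / d) * (rstar (n+1) / 2)) := by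
    have h := ((summable_nat_add_iff 1).mpr h_sum).div_const 2
    refine h.congr fun n => ?_
    push_cast
    ring
  have h2 : Summable (fun n : ℕ => (2:ℝ) ^ (((n:ℝ) + 1) / d) * (4:ℝ)⁻¹ ^ n) := by
    have hgeo : Summable (fun n : ℕ => 2 * (2:ℝ)⁻¹ ^ n) :=
      (summable_geometric_of_lt_one (by norm_num) (by norm_num)).mul_left 2
    refine Summable.of_nonneg_of_le (fun n => by positivity) (fun n => ?_) hgeo
    have hle : (2:ℝ) ^ (((n:ℝ) + 1) / d) ≤ (2:ℝ) ^ ((n:ℝ) + 1) := by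
      apply Real.rpow_le_rpow_of_exponent_le one_le_two
      rw [div_le_iff₀ hd0]
      nlinarith [Nat.cast_nonneg (α := ℝ) n, (by exact_mod_cast hd : (1:ℝ) ≤ d)]
    have heq : (2:ℝ) ^ ((n:ℝ) + 1) = 2 ^ (n + 1 : ℕ) := by
      rw [← Real.rpow_natCast (2:ℝ) (n+1)]
      push_cast; ring_nf
    have h4 : (0:ℝ) ≤ (4:ℝ)⁻¹ ^ n := by positivity
    calc (2:ℝ) ^ (((n:ℝ) + 1) / d) * (4:ℝ)⁻¹ ^ n
        ≤ (2:ℝ) ^ ((n:ℝ) + 1) * (4:ℝ)⁻¹ ^ n := by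
          exact mul_le_mul_of_nonneg_right hle h4
      _ = 2 * (2:ℝ)⁻¹ ^ n := by
          rw [heq, pow_succ]
          rw [show ((4:ℝ)⁻¹ = (2:ℝ)⁻¹ * (2:ℝ)⁻¹) by norm_num, mul_pow]
          rw [mul_comm ((2:ℝ)^n) 2, mul_assoc]
          congr 1
          rw [← mul_assoc, ← mul_pow]
          norm_num
  refine (h1.add h2).congr fun n => ?_
  unfold gFun aSeq
  ring


lemma cTerm_eq (hd : 1 ≤ d) (m j : ℕ) :
    (2:ℝ) ^ j * aSeq rstar (m + j * d)
      = (2:ℝ) ^ (-(((m:ℝ) + 1) / d)) * gFun rstar d (m + j * d) := by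
  have hd0 : (d:ℝ) ≠ 0 := by
    have : (0:ℝ) < (d:ℝ) := by exact_mod_cast hd
    linarith
  unfold gFun
  rw [← mul_assoc, ← Real.rpow_natCast (2:ℝ) j, ← Real.rpow_add (by norm_num : (0:ℝ) < 2)]
  have hexp : (-(((m:ℝ) + 1) / d) + (((m + j * d : ℕ) : ℝ) + 1) / d) = (j:ℝ) := by
    push_cast
    field_simp
    ring
  rw [hexp]

lemma cTerm_summable (hd : 1 ≤ d) (hrs : ∀ n, 0 ≤ rstar (n+1))
    (h_sum : Summable fun n : ℕ => (2 : ℝ) ^ ((n : ℝ) / d) * rstar n) (m : ℕ) :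
    Summable (fun j : ℕ => (2:ℝ) ^ j * aSeq rstar (m + j * d)) := by
  have hg := gFun_summable hd hrs h_sum
  have hinj : Function.Injective (fun j : ℕ => m + j * d) := by
    intro x y h
    simp only at h
    have : x * d = y * d := by omega
    exact Nat.eq_of_mul_eq_mul_right (by omega) this
  have h := (hg.comp_injective hinj).mul_left ((2:ℝ) ^ (-(((m:ℝ) + 1) / d)))
  exact h.congr fun j => (cTerm_eq hd m j).symm

lemma cSeq_nonneg (hrs : ∀ n, 0 ≤ rstar (n+1)) (m : ℕ) : 0 ≤ cSeq rstar d m := by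
  apply tsum_nonneg
  intro j
  have := aSeq_nonneg hrs (m + j * d)
  positivity

lemma cSeq_rec (hd : 1 ≤ d) (hrs : ∀ n, 0 ≤ rstar (n+1))
    (h_sum : Summable fun n : ℕ => (2 : ℝ) ^ ((n : ℝ) / d) * rstar n) (m : ℕ) :
    cSeq rstar d m = aSeq rstar m + 2 * cSeq rstar d (m + d) := by
  unfold cSeq
  rw [Summable.tsum_eq_zero_add (cTerm_summable hd hrs h_sum m)]
  congr 1
  · norm_num
  · rw [← tsum_mul_left]
    apply tsum_congr
    intro j
    have harith : m + (j + 1) * d = m + d + j * d := by ring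
    rw [harith, pow_succ]
    ring

lemma aSeq_le_cSeq (hd : 1 ≤ d) (hrs : ∀ n, 0 ≤ rstar (n+1))
    (h_sum : Summable fun n : ℕ => (2 : ℝ) ^ ((n : ℝ) / d) * rstar n) (m : ℕ) :
    aSeq rstar m ≤ cSeq rstar d m := by
  have h := cSeq_rec hd hrs h_sum m
  have h2 := cSeq_nonneg (d := d) hrs (m + d)
  linarith

lemma sum_range_cSeq_le (hd : 1 ≤ d) (hrs : ∀ n, 0 ≤ rstar (n+1))
    (h_sum : Summable fun n : ℕ => (2 : ℝ) ^ ((n : ℝ) / d) * rstar n) :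
    ∀ (N k : ℕ), ∑ q ∈ Finset.range N, cSeq rstar d (k + q * d) ≤ 2 * cSeq rstar d k := by
  intro N
  induction N with
  | zero =>
      intro k
      simp [cSeq_nonneg (d := d) hrs k]
  | succ N ih =>
      intro k
      rw [Finset.sum_range_succ']
      have h1 : ∑ q ∈ Finset.range N, cSeq rstar d (k + (q + 1) * d)
          = ∑ q ∈ Finset.range N, cSeq rstar d ((k + d) + q * d) := by
        apply Finset.sum_congr rfl
        intro q _
        congr 1
        ring
      have h2 := ih (k + d)
      have h3 := cSeq_rec hd hrs h_sum k
      have h4 := aSeq_nonneg hrs k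
      simp only [Nat.zero_mul, Nat.add_zero]
      rw [h1]
      linarith

lemma cSeq_summable (hd : 1 ≤ d) (hrs : ∀ n, 0 ≤ rstar (n+1))
    (h_sum : Summable fun n : ℕ => (2 : ℝ) ^ ((n : ℝ) / d) * rstar n) :
    Summable (cSeq rstar d) := by
  have hd0 : (0:ℝ) < (d:ℝ) := by exact_mod_cast hd
  have hg := gFun_summable hd hrs h_sum
  set T := ∑' n, gFun rstar d n with hT
  have hle : ∀ m : ℕ, cSeq rstar d m ≤ (2:ℝ) ^ (-(((m:ℝ) + 1) / d)) * T := by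
    intro m
    have hinj : Function.Injective (fun j : ℕ => m + j * d) := by
      intro x y h
      simp only at h
      have : x * d = y * d := by omega
      exact Nat.eq_of_mul_eq_mul_right (by omega) this
    calc cSeq rstar d m
        = ∑' j : ℕ, (2:ℝ) ^ (-(((m:ℝ) + 1) / d)) * gFun rstar d (m + j * d) :=
          tsum_congr fun j => cTerm_eq hd m j
      _ = (2:ℝ) ^ (-(((m:ℝ) + 1) / d)) * ∑' j : ℕ, gFun rstar d (m + j * d) := tsum_mul_left
      _ ≤ (2:ℝ) ^ (-(((m:ℝ) + 1) / d)) * T := by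
          apply mul_le_mul_of_nonneg_left _ (Real.rpow_nonneg (by norm_num) _)
          exact tsum_comp_le_tsum_of_inj hg (gFun_nonneg hrs) hinj
  set r : ℝ := (2:ℝ) ^ ((-1:ℝ) / d) with hr
  have hr_nonneg : 0 ≤ r := Real.rpow_nonneg (by norm_num) _
  have hr_lt : r < 1 := by
    apply Real.rpow_lt_one_of_one_lt_of_neg one_lt_two
    rw [div_neg_iff]
    right
    constructor <;> [linarith; exact hd0]
  have hgeo : Summable (fun m : ℕ => r ^ m * (r * T)) :=
    (summable_geometric_of_lt_one hr_nonneg hr_lt).mul_right _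
  apply Summable.of_nonneg_of_le (fun m => cSeq_nonneg hrs m) (fun m => ?_) hgeo
  refine le_trans (hle m) (le_of_eq ?_)
  have : (2:ℝ) ^ (-(((m:ℝ) + 1) / d)) = r ^ m * r := by
    rw [hr, ← Real.rpow_natCast ((2:ℝ) ^ ((-1:ℝ)/d)) m, ← Real.rpow_mul (by norm_num : (0:ℝ) ≤ 2),
      ← Real.rpow_add (by norm_num : (0:ℝ) < 2)]
    congr 1
    field_simp
    ring
  rw [this]
  ring


lemma exists_first_diff : ∀ (I J : List Bool), ¬ I <+: J → ¬ J <+: I →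
    ∃ m, m < I.length ∧ m < J.length ∧ I.take m = J.take m ∧ I.getD m false ≠ J.getD m false
  | [], J, h1, _ => absurd (List.nil_prefix (l := J)) h1
  | (a :: I), [], _, h2 => absurd (List.nil_prefix (l := a :: I)) h2
  | (a :: I), (b :: J), h1, h2 => by
      by_cases hab : a = b
      · subst hab
        have h1' : ¬ I <+: J := fun h => h1 (List.cons_prefix_cons.mpr ⟨rfl, h⟩)
        have h2' : ¬ J <+: I := fun h => h2 (List.cons_prefix_cons.mpr ⟨rfl, h⟩)
        obtain ⟨m, hm1, hm2, ht, hne⟩ := exists_first_diff I J h1' h2'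
        exact ⟨m + 1, by simpa using hm1, by simpa using hm2, by simpa using ht,
          by simpa using hne⟩
      · exact ⟨0, by simp, by simp, by simp, by simpa using hab⟩

lemma XPt_apply (I : List Bool) (i : Fin d) :
    XPt rstar d I i = ∑ k ∈ Finset.range I.length,
      if k % d = (i : ℕ) then (if I.getD k false then (1:ℝ) else -1) * cSeq rstar d k else 0 :=
  rfl

lemma key_dist (hd : 1 ≤ d) (hrs : ∀ n, 0 ≤ rstar (n+1))
    (h_sum : Summable fun n : ℕ => (2 : ℝ) ^ ((n : ℝ) / d) * rstar n)
    (K₁ K₂ : List Bool) (m : ℕ) (hm1 : m < K₁.length) (hm2 : m < K₂.length)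
    (htake : K₁.take m = K₂.take m) (hne : K₁.getD m false ≠ K₂.getD m false) :
    2 * aSeq rstar m ≤ dist (XPt rstar d K₁) (XPt rstar d K₂) := by
  classical
  have hd0 : 0 < d := hd
  set c : ℕ → ℝ := cSeq rstar d with hc
  have hcn : ∀ k, 0 ≤ c k := fun k => cSeq_nonneg hrs k
  set i : Fin d := ⟨m % d, Nat.mod_lt _ hd0⟩ with hi
  set F : List Bool → ℕ → ℝ := fun K k =>
    if k % d = m % d then (if K.getD k false then (1:ℝ) else -1) * c k else 0 with hF
  have hXi : ∀ K : List Bool, XPt rstar d K i = ∑ k ∈ Finset.range K.length, F K k :=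
    fun K => rfl
  have habsF : ∀ (K : List Bool) (k : ℕ),
      |F K k| ≤ (if k % d = m % d then c k else 0) := by
    intro K k
    by_cases h : k % d = m % d
    · simp only [hF, h, if_true]
      cases hb : K.getD k false
      · simp [abs_of_nonpos, hcn k, abs_of_nonneg]
      · simp [abs_of_nonneg (hcn k)]
    · simp [hF, h]
  have tail_bound : ∀ (K : List Bool) (t : ℕ),
      |∑ j ∈ Finset.range t, F K (m + 1 + j)| ≤ c m - aSeq rstar m := by
    intro K t
    have step1 : |∑ j ∈ Finset.range t, F K (m + 1 + j)|
        ≤ ∑ j ∈ Finset.range t, (if (m + 1 + j) % d = m % d then c (m + 1 + j) else 0) := by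
      refine le_trans (Finset.abs_sum_le_sum_abs _ _) ?_
      exact Finset.sum_le_sum fun j _ => habsF K _
    have step2 : ∑ j ∈ Finset.range t, (if (m + 1 + j) % d = m % d then c (m + 1 + j) else 0)
        = ∑ j ∈ (Finset.range t).filter (fun j => (m + 1 + j) % d = m % d), c (m + 1 + j) :=
      (Finset.sum_filter _ _).symm
    have step3 : ∑ j ∈ (Finset.range t).filter (fun j => (m + 1 + j) % d = m % d), c (m + 1 + j)
        = ∑ k ∈ ((Finset.range t).filter (fun j => (m + 1 + j) % d = m % d)).image
            (fun j => m + 1 + j), c k := by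
      rw [Finset.sum_image]
      intro x _ y _ h
      simp only at h
      omega
    have hsub : ((Finset.range t).filter (fun j => (m + 1 + j) % d = m % d)).image
          (fun j => m + 1 + j)
        ⊆ (Finset.range t).image (fun q => (m + d) + q * d) := by
      intro k hk
      simp only [Finset.mem_image, Finset.mem_filter, Finset.mem_range] at hk ⊢
      obtain ⟨j, ⟨hjt, hmod⟩, rfl⟩ := hk
      have hdvd : d ∣ (m + 1 + j - m) :=
        Nat.dvd_of_mod_eq_zero (Nat.sub_mod_eq_zero_of_mod_eq hmod)
      have hsub' : m + 1 + j - m = j + 1 := by omega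
      rw [hsub'] at hdvd
      obtain ⟨q, hq⟩ := hdvd
      have hq1 : 1 ≤ q := by
        rcases Nat.eq_zero_or_pos q with h | h
        · rw [h, Nat.mul_zero] at hq; omega
        · exact h
      have key4 : d * (q - 1) + d = j + 1 := by
        have h2 : d * (q - 1) + d = d * q := by
          cases q with
          | zero => omega
          | succ q' => simp [Nat.mul_succ]
        omega
      have hcomm : (q - 1) * d = d * (q - 1) := Nat.mul_comm _ _
      have key1 : q - 1 ≤ d * (q - 1) := Nat.le_mul_of_pos_left _ hd0
      exact ⟨q - 1, by omega, by omega⟩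
    have step4 : ∑ k ∈ ((Finset.range t).filter (fun j => (m + 1 + j) % d = m % d)).image
          (fun j => m + 1 + j), c k
        ≤ ∑ k ∈ (Finset.range t).image (fun q => (m + d) + q * d), c k :=
      Finset.sum_le_sum_of_subset_of_nonneg hsub (fun k _ _ => hcn k)
    have step5 : ∑ k ∈ (Finset.range t).image (fun q => (m + d) + q * d), c k
        = ∑ q ∈ Finset.range t, c ((m + d) + q * d) := by
      rw [Finset.sum_image]
      intro x _ y _ h
      simp only at h
      have hx : x * d = y * d := by omega
      exact Nat.eq_of_mul_eq_mul_right hd0 hx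
    have step6 : ∑ q ∈ Finset.range t, c ((m + d) + q * d) ≤ 2 * c (m + d) :=
      sum_range_cSeq_le hd hrs h_sum t (m + d)
    have hrec : c m = aSeq rstar m + 2 * c (m + d) := cSeq_rec hd hrs h_sum m
    calc |∑ j ∈ Finset.range t, F K (m + 1 + j)|
        ≤ ∑ j ∈ Finset.range t, (if (m + 1 + j) % d = m % d then c (m + 1 + j) else 0) := step1
      _ = _ := step2
      _ = _ := step3
      _ ≤ _ := step4
      _ = _ := step5
      _ ≤ 2 * c (m + d) := step6
      _ = c m - aSeq rstar m := by linarith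
  obtain ⟨t₁, ht₁⟩ : ∃ t, K₁.length = (m + 1) + t := ⟨K₁.length - (m + 1), by omega⟩
  obtain ⟨t₂, ht₂⟩ : ∃ t, K₂.length = (m + 1) + t := ⟨K₂.length - (m + 1), by omega⟩
  have hgetD : ∀ k, k < m → K₁.getD k false = K₂.getD k false := by
    intro k hk
    have h1 : K₁[k]? = K₂[k]? := by
      rw [← List.getElem?_take_of_lt (l := K₁) hk, ← List.getElem?_take_of_lt (l := K₂) hk,
        htake]
    rw [List.getD_eq_getElem?_getD, List.getD_eq_getElem?_getD, h1]
  have head_eq : ∑ k ∈ Finset.range m, F K₁ k = ∑ k ∈ Finset.range m, F K₂ k := by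
    apply Finset.sum_congr rfl
    intro k hk
    rw [Finset.mem_range] at hk
    simp only [hF, hgetD k hk]
  have hsplit : ∀ (K : List Bool) (t : ℕ), K.length = (m + 1) + t →
      ∑ k ∈ Finset.range K.length, F K k
        = ((∑ k ∈ Finset.range m, F K k) + F K m) + ∑ j ∈ Finset.range t, F K (m + 1 + j) := by
    intro K t h
    rw [h, Finset.sum_range_add, Finset.sum_range_succ]
  have hmm : m % d = m % d := rfl
  have hv : ∀ K : List Bool, F K m = (if K.getD m false then (1:ℝ) else -1) * c m :=
    fun K => if_pos hmm
  have hcenter : |F K₁ m - F K₂ m| = 2 * c m := by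
    rw [hv K₁, hv K₂]
    cases hb1 : K₁.getD m false <;> cases hb2 : K₂.getD m false
    · rw [hb1, hb2] at hne; exact absurd rfl hne
    · simp only [Bool.false_eq_true, if_false, if_true]
      rw [show (-1:ℝ) * c m - 1 * c m = -(2 * c m) by ring, abs_neg, abs_of_nonneg]
      linarith [hcn m]
    · simp only [Bool.false_eq_true, if_false, if_true]
      rw [show (1:ℝ) * c m - (-1) * c m = 2 * c m by ring, abs_of_nonneg]
      linarith [hcn m]
    · rw [hb1, hb2] at hne; exact absurd rfl hne
  set T₁ := ∑ j ∈ Finset.range t₁, F K₁ (m + 1 + j) with hT₁def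
  set T₂ := ∑ j ∈ Finset.range t₂, F K₂ (m + 1 + j) with hT₂def
  have hD : XPt rstar d K₁ i - XPt rstar d K₂ i = (F K₁ m - F K₂ m) + (T₁ - T₂) := by
    rw [hXi K₁, hXi K₂, hsplit K₁ t₁ ht₁, hsplit K₂ t₂ ht₂, head_eq]
    ring
  have hT1 : |T₁| ≤ c m - aSeq rstar m := tail_bound K₁ t₁
  have hT2 : |T₂| ≤ c m - aSeq rstar m := tail_bound K₂ t₂
  have habs_sub : ∀ x y : ℝ, |x - y| ≤ |x| + |y| := by
    intro x y
    rw [sub_eq_add_neg]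
    exact (abs_add_le _ _).trans (le_of_eq (by rw [abs_neg]))
  have habs : 2 * aSeq rstar m ≤ |XPt rstar d K₁ i - XPt rstar d K₂ i| := by
    have e1 : F K₁ m - F K₂ m = (XPt rstar d K₁ i - XPt rstar d K₂ i) - (T₁ - T₂) := by
      rw [hD]; ring
    have e4 : 2 * c m ≤ |XPt rstar d K₁ i - XPt rstar d K₂ i| + (|T₁| + |T₂|) := by
      calc 2 * c m = |F K₁ m - F K₂ m| := hcenter.symm
        _ = |(XPt rstar d K₁ i - XPt rstar d K₂ i) - (T₁ - T₂)| := by rw [e1]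
        _ ≤ |XPt rstar d K₁ i - XPt rstar d K₂ i| + |T₁ - T₂| := habs_sub _ _
        _ ≤ |XPt rstar d K₁ i - XPt rstar d K₂ i| + (|T₁| + |T₂|) := by
            linarith [habs_sub T₁ T₂]
    linarith
  have hdist : |XPt rstar d K₁ i - XPt rstar d K₂ i|
      ≤ dist (XPt rstar d K₁) (XPt rstar d K₂) := by
    rw [EuclideanSpace.dist_eq]
    have h1 : |XPt rstar d K₁ i - XPt rstar d K₂ i|
        = Real.sqrt (dist (XPt rstar d K₁ i) (XPt rstar d K₂ i) ^ 2) := by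
      rw [Real.dist_eq, Real.sqrt_sq_eq_abs, abs_abs]
    rw [h1]
    apply Real.sqrt_le_sqrt
    exact Finset.single_le_sum (f := fun j : Fin d => dist (XPt rstar d K₁ j) (XPt rstar d K₂ j) ^ 2)
      (fun j _ => sq_nonneg _) (Finset.mem_univ i)
  linarith


lemma XPt_norm_le (hd : 1 ≤ d) (hrs : ∀ n, 0 ≤ rstar (n+1))
    (h_sum : Summable fun n : ℕ => (2 : ℝ) ^ ((n : ℝ) / d) * rstar n) (I : List Bool) :
    ‖XPt rstar d I‖ ≤ Real.sqrt (d * (∑' k, cSeq rstar d k) ^ 2) := by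
  have hsumc := cSeq_summable hd hrs h_sum
  rw [EuclideanSpace.norm_eq]
  apply Real.sqrt_le_sqrt
  have hcoord : ∀ i : Fin d, ‖XPt rstar d I i‖ ≤ ∑' k, cSeq rstar d k := by
    intro i
    rw [XPt_apply, Real.norm_eq_abs]
    calc |∑ k ∈ Finset.range I.length,
          if k % d = (i:ℕ) then (if I.getD k false then (1:ℝ) else -1) * cSeq rstar d k else 0|
        ≤ ∑ k ∈ Finset.range I.length,
          |if k % d = (i:ℕ) then (if I.getD k false then (1:ℝ) else -1) * cSeq rstar d k else 0| :=
          Finset.abs_sum_le_sum_abs _ _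
      _ ≤ ∑ k ∈ Finset.range I.length, cSeq rstar d k := by
          apply Finset.sum_le_sum
          intro k _
          by_cases h : k % d = (i:ℕ)
          · rw [if_pos h, abs_mul]
            have h1 : |if I.getD k false then (1:ℝ) else -1| = 1 := by
              cases I.getD k false <;> simp
            rw [h1, one_mul, abs_of_nonneg (cSeq_nonneg hrs k)]
          · rw [if_neg h]
            simpa using cSeq_nonneg hrs k
      _ ≤ ∑' k, cSeq rstar d k := Summable.sum_le_tsum _ (fun k _ => cSeq_nonneg hrs k) hsumc
  calc ∑ i : Fin d, ‖XPt rstar d I i‖ ^ 2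
      ≤ ∑ _i : Fin d, (∑' k, cSeq rstar d k) ^ 2 := by
        apply Finset.sum_le_sum
        intro i _
        exact pow_le_pow_left₀ (norm_nonneg _) (hcoord i) 2
    _ = d * (∑' k, cSeq rstar d k) ^ 2 := by
        rw [Finset.sum_const, Finset.card_univ, Fintype.card_fin, nsmul_eq_mul]

end EmbedConstrAux

/-- **Theorem (construction / sharpness).** Finite `{0,1}`-sequences are modelled as
lists of booleans; `I <+: J` means `I` is a prefix of `J`. Given a distance function
`ρ` on pairs of sequences (vanishing on comparable pairs, symmetric, monotone under
extension), and a sequence `rstar` such that `rstar n` bounds `ρ(J₁,J₂)` whenever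
`J₁, J₂` have length `≥ n`, agree in their first `n−1` entries and differ in the
`n`-th entry (so that `sup` of those values is `≤ rstar n`), if `∑ 2^{n/d} rstar n < ∞`
then there is a family of nonempty bounded sets `A_I ⊆ ℝ^d`, nested along prefixes,
disjoint for incomparable sequences, with `dist(A_I, A_J) ≥ ρ(I,J)`. -/
theorem embedding_construction (d : ℕ) (hd : 1 ≤ d)
    (ρ : List Bool → List Bool → ℝ)
    (hρ_nonneg : ∀ I J, 0 ≤ ρ I J)
    (hρ_zero : ∀ I J : List Bool, (I <+: J ∨ J <+: I) → ρ I J = 0)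
    (hρ_symm : ∀ I J, ρ I J = ρ J I)
    (hρ_mono : ∀ I J K : List Bool, I <+: J → ρ I K ≤ ρ J K)
    (rstar : ℕ → ℝ)
    (h_rstar : ∀ n : ℕ, 1 ≤ n → ∀ J₁ J₂ : List Bool,
      n ≤ J₁.length → n ≤ J₂.length →
      J₁.take (n - 1) = J₂.take (n - 1) → J₁[n - 1]? ≠ J₂[n - 1]? →
      ρ J₁ J₂ ≤ rstar n)
    (h_sum : Summable fun n : ℕ => (2 : ℝ) ^ ((n : ℝ) / d) * rstar n) :
    ∃ A : List Bool → Set (EuclideanSpace ℝ (Fin d)),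
      (∀ I, (A I).Nonempty ∧ Bornology.IsBounded (A I)) ∧
      (∀ I J : List Bool, I <+: J → A J ⊆ A I) ∧
      (∀ I J : List Bool, ¬ I <+: J → ¬ J <+: I →
        A I ∩ A J = ∅ ∧ ∀ x ∈ A I, ∀ y ∈ A J, ρ I J ≤ dist x y) := by
  classical
  have hrs : ∀ n : ℕ, 0 ≤ rstar (n + 1) := by
    intro n
    have htk : ∀ b : Bool, (List.replicate n false ++ [b]).take n = List.replicate n false := by
      intro b
      have h := List.take_left (l₁ := List.replicate n false) (l₂ := [b])
      rwa [List.length_replicate] at h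
    have hget : (List.replicate n false ++ [false])[n]?
        ≠ (List.replicate n false ++ [true])[n]? := by
      simp [List.getElem?_append_right]
    have hlen : ∀ b : Bool, (List.replicate n false ++ [b]).length = n + 1 := by
      intro b; simp
    have h := h_rstar (n + 1) (by omega) (List.replicate n false ++ [false])
      (List.replicate n false ++ [true]) (le_of_eq (hlen false).symm) (le_of_eq (hlen true).symm)
      (by simpa using (htk false).trans (htk true).symm) (by simpa using hget)
    exact le_trans (hρ_nonneg _ _) h
  set X : List Bool → EuclideanSpace ℝ (Fin d) := EmbedConstrAux.XPt rstar d with hX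
  have main : ∀ K₁ K₂ : List Bool, ¬ K₁ <+: K₂ → ¬ K₂ <+: K₁ →
      ρ K₁ K₂ ≤ dist (X K₁) (X K₂) ∧ 0 < dist (X K₁) (X K₂) := by
    intro K₁ K₂ hn1 hn2
    obtain ⟨m, hm1, hm2, htake, hne⟩ := EmbedConstrAux.exists_first_diff K₁ K₂ hn1 hn2
    have hdist := EmbedConstrAux.key_dist hd hrs h_sum K₁ K₂ m hm1 hm2 htake hne
    have hρle : ρ K₁ K₂ ≤ rstar (m + 1) := by
      apply h_rstar (m + 1) (by omega) K₁ K₂ (by omega) (by omega)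
        (by simpa using htake)
      simp only [Nat.add_sub_cancel]
      intro hcon
      apply hne
      rw [List.getD_eq_getElem?_getD, List.getD_eq_getElem?_getD, hcon]
    have hpow : (0:ℝ) < (4:ℝ)⁻¹ ^ m := by positivity
    have haseq : rstar (m + 1) ≤ 2 * EmbedConstrAux.aSeq rstar m := by
      unfold EmbedConstrAux.aSeq
      linarith
    have hapos : 0 < EmbedConstrAux.aSeq rstar m := EmbedConstrAux.aSeq_pos hrs m
    constructor
    · linarith
    · linarith
  refine ⟨fun I => X '' {J | I <+: J}, ?_, ?_, ?_⟩
  · intro I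
    constructor
    · exact ⟨X I, Set.mem_image_of_mem X (show I <+: I from List.prefix_rfl)⟩
    · apply Bornology.IsBounded.subset (Metric.isBounded_closedBall
        (x := (0 : EuclideanSpace ℝ (Fin d)))
        (r := Real.sqrt (d * (∑' k, EmbedConstrAux.cSeq rstar d k) ^ 2)))
      rintro x ⟨K, -, rfl⟩
      rw [Metric.mem_closedBall, dist_zero_right]
      exact EmbedConstrAux.XPt_norm_le hd hrs h_sum K
  · intro I J hIJ
    rintro x ⟨K, hK, rfl⟩
    exact ⟨K, hIJ.trans hK, rfl⟩
  · intro I J h1 h2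
    have hinc : ∀ K₁ K₂ : List Bool, I <+: K₁ → J <+: K₂ → ¬ K₁ <+: K₂ ∧ ¬ K₂ <+: K₁ := by
      intro K₁ K₂ hIK hJK
      constructor
      · intro h
        rcases List.prefix_or_prefix_of_prefix (hIK.trans h) hJK with h' | h'
        · exact h1 h'
        · exact h2 h'
      · intro h
        rcases List.prefix_or_prefix_of_prefix (hJK.trans h) hIK with h' | h'
        · exact h2 h'
        · exact h1 h'
    constructor
    · rw [Set.eq_empty_iff_forall_notMem]
      rintro x ⟨⟨K₁, hK₁, rfl⟩, hxJ⟩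
      obtain ⟨K₂, hK₂, hx⟩ := hxJ
      obtain ⟨hn1, hn2⟩ := hinc K₁ K₂ hK₁ hK₂
      have hpos := (main K₁ K₂ hn1 hn2).2
      rw [hx, dist_self] at hpos
      exact lt_irrefl _ hpos
    · rintro x ⟨K₁, hK₁, rfl⟩ y ⟨K₂, hK₂, rfl⟩
      obtain ⟨hn1, hn2⟩ := hinc K₁ K₂ hK₁ hK₂
      have hle := (main K₁ K₂ hn1 hn2).1
      have hchain : ρ I J ≤ ρ K₁ K₂ := by
        calc ρ I J ≤ ρ K₁ J := hρ_mono I K₁ J hK₁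
          _ = ρ J K₁ := hρ_symm _ _
          _ ≤ ρ K₂ K₁ := hρ_mono J K₂ K₁ hK₂
          _ = ρ K₁ K₂ := hρ_symm _ _
      linarith
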